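/- Let G: ℝ^k → ℝ^d be an n-layer ReLU network with no offsets, G(x) = σ∘(W_n σ∘(W_{n-1} ⋯ σ∘(W_1 x))), where each layer has at most d nodes. Then ℝ^k can be partitioned into at most (d^k + 1)^n ≤ (2d)^{kn} pieces such that G restricted to each piece coincides with a linear map from ℝ^k to ℝ^d. -/

import Mathlib

/-- Output of the first `n` layers of a ReLU network with no offsets:
`reluNet dm W n x = σ∘(W_{n-1} σ∘(⋯ σ∘(W_0 x)))` where `σ(t) = max t 0` is
applied entrywise. -/
noncomputable def reluNet (dm : ℕ → ℕ)
    (W : ∀ i : ℕ, Matrix (Fin (dm (i + 1))) (Fin (dm i)) ℝ) :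
    (n : ℕ) → (Fin (dm 0) → ℝ) → Fin (dm n) → ℝ
  | 0, x => x
  | (n + 1), x => fun j => max ((W n).mulVec (reluNet dm W n x) j) 0

/-- an `n`-layer ReLU network `G : ℝ^k → ℝ^d` with no offsets and at
most `d` nodes per layer is piecewise linear: `ℝ^k` can be partitioned into at
most `(d^k + 1)^n ≤ (2d)^(k n)` pieces on each of which `G` coincides with a
linear map. -/

lemma choose_le_pow' (n k : ℕ) : n.choose k ≤ n ^ k := by
  induction k with
  | zero => simp
  | succ k ih =>
    calc n.choose (k+1) ≤ n.choose (k+1) * (k+1) := Nat.le_mul_of_pos_right _ (Nat.succ_pos k)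
    _ = n.choose k * (n - k) := Nat.choose_succ_right_eq n k
    _ ≤ n ^ k * n := Nat.mul_le_mul ih (Nat.sub_le _ _)
    _ = n ^ (k+1) := (pow_succ n k).symm

lemma sum_choose_le (d : ℕ) (hd : 1 ≤ d) :
    ∀ k : ℕ, ∑ i ∈ Finset.range (k+1), d.choose i ≤ d ^ k + 1 := by
  intro k
  induction k with
  | zero => simp
  | succ k ih =>
    rcases Nat.eq_zero_or_pos k with rfl | hk
    · simp [Finset.sum_range_succ]; omega
    · rw [Finset.sum_range_succ]
      have key : d.choose (k+1) * (k+1) = d * (d-1).choose k := by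
        have h := Nat.add_one_mul_choose_eq (d-1) k
        have : d - 1 + 1 = d := by omega
        rw [this] at h
        simpa [Nat.succ_eq_add_one] using h.symm
      have h2 : d.choose (k+1) * 2 ≤ d * (d-1)^k := by
        calc d.choose (k+1) * 2 ≤ d.choose (k+1) * (k+1) :=
              Nat.mul_le_mul_left _ (by omega)
        _ = d * (d-1).choose k := key
        _ ≤ d * (d-1)^k := Nat.mul_le_mul_left _ (choose_le_pow' _ _)
      have h3 : d * (d-1)^k ≤ d^k * (d-1) := by
        obtain ⟨k', rfl⟩ : ∃ k', k = k' + 1 := ⟨k - 1, by omega⟩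
        calc d * (d-1)^(k'+1) = (d * (d-1)^k') * (d-1) := by ring
        _ ≤ (d * d^k') * (d-1) := by
            exact Nat.mul_le_mul_right _ (Nat.mul_le_mul_left _ (Nat.pow_le_pow_left (by omega) _))
        _ = d^(k'+1) * (d-1) := by rw [pow_succ]; ring
      have h4 : d.choose (k+1) ≤ d^k * (d-1) := by omega
      have h5 : d ^ k * (d - 1) + d^k = d^(k+1) := by
        have hd1 : d - 1 + 1 = d := by omega
        calc d ^ k * (d - 1) + d^k = d^k * ((d-1)+1) := by ring
        _ = d^(k+1) := by rw [hd1, pow_succ]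
      omega

lemma pattern_card :
    ∀ (m κ : ℕ) (V : Type) [AddCommGroup V] [Module ℝ V] [FiniteDimensional ℝ V],
      Module.finrank ℝ V ≤ κ → ∀ (f : Fin m → (V →ₗ[ℝ] ℝ)),
      (Set.range (fun x : V => fun j => decide (0 ≤ f j x))).ncard
        ≤ ∑ i ∈ Finset.range (κ+1), m.choose i := by
  intro m
  induction m with
  | zero =>
    intro κ V _ _ _ _ f
    have hsub : (Set.range (fun x : V => fun j : Fin 0 => decide (0 ≤ f j x))).Subsingleton := by
      rintro p ⟨x, rfl⟩ q ⟨y, rfl⟩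
      funext j; exact absurd j.2 (by omega)
    calc _ ≤ 1 := (Set.ncard_le_one (Set.toFinite _)).mpr (fun a ha b hb => hsub ha hb)
    _ ≤ _ := by
        have : (0:ℕ).choose 0 = 1 := rfl
        calc 1 = (0:ℕ).choose 0 := rfl
        _ ≤ ∑ i ∈ Finset.range (κ+1), (0:ℕ).choose i :=
            Finset.single_le_sum (fun i _ => Nat.zero_le _) (by simp)
  | succ m ih =>
    intro κ V _ _ _ hdim f
    match κ with
    | 0 =>
      have hV : Subsingleton V := by
        rw [← Module.finrank_zero_iff (R := ℝ)]; omega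
      have hsub : (Set.range (fun x : V => fun j => decide (0 ≤ f j x))).Subsingleton := by
        rintro p ⟨x, rfl⟩ q ⟨y, rfl⟩
        rw [Subsingleton.elim x y]
      calc _ ≤ 1 := (Set.ncard_le_one (Set.toFinite _)).mpr (fun a ha b hb => hsub ha hb)
      _ ≤ _ := by
          calc (1:ℕ) = (m+1).choose 0 := rfl
          _ ≤ _ := Finset.single_le_sum (fun i _ => Nat.zero_le _) (by simp)
    | (κ' + 1) =>
      set pat : V → (Fin (m+1) → Bool) := fun x => fun j => decide (0 ≤ f j x) with hpat
      set P : Set (Fin (m+1) → Bool) := Set.range pat with hP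
      set drop : (Fin (m+1) → Bool) → (Fin m → Bool) := fun p => p ∘ Fin.castSucc with hdrop
      set Pt : Set (Fin (m+1) → Bool) := {p ∈ P | p (Fin.last m) = true} with hPt
      set Pf : Set (Fin (m+1) → Bool) := {p ∈ P | p (Fin.last m) = false} with hPf
      set f' : Fin m → (V →ₗ[ℝ] ℝ) := fun j => f j.castSucc with hf'
      -- P ⊆ Pt ∪ Pf
      have hcover : P ⊆ Pt ∪ Pf := by
        intro p hp
        rcases Bool.eq_false_or_eq_true (p (Fin.last m)) with h | h
        · exact Or.inl ⟨hp, h⟩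
        · exact Or.inr ⟨hp, h⟩
      -- injectivity of drop on Pt and Pf
      have hinj : ∀ b : Bool, Set.InjOn drop {p ∈ P | p (Fin.last m) = b} := by
        intro b p hp q hq h
        funext j
        induction j using Fin.lastCases with
        | last => exact hp.2.trans hq.2.symm
        | cast i => exact congrFun h i
      have hPc : P.ncard ≤ (drop '' Pt).ncard + (drop '' Pf).ncard := by
        calc P.ncard ≤ (Pt ∪ Pf).ncard := Set.ncard_le_ncard hcover (Set.toFinite _)
        _ ≤ Pt.ncard + Pf.ncard := Set.ncard_union_le _ _
        _ = (drop '' Pt).ncard + (drop '' Pf).ncard := by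
            rw [Set.ncard_image_of_injOn (hinj true), Set.ncard_image_of_injOn (hinj false)]
      have hie : (drop '' Pt).ncard + (drop '' Pf).ncard
          = (drop '' Pt ∪ drop '' Pf).ncard + (drop '' Pt ∩ drop '' Pf).ncard :=
        (Set.ncard_union_add_ncard_inter _ _ (Set.toFinite _) (Set.toFinite _)).symm
      -- the union is contained in the patterns of f'
      have hun : drop '' Pt ∪ drop '' Pf ⊆ Set.range (fun x : V => fun j => decide (0 ≤ f' j x)) := by
        rintro p' (⟨p, hp, rfl⟩ | ⟨p, hp, rfl⟩) <;>
          · obtain ⟨x, rfl⟩ := hp.1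
            exact ⟨x, rfl⟩
      have hunc : (drop '' Pt ∪ drop '' Pf).ncard ≤ ∑ i ∈ Finset.range (κ'+2), m.choose i :=
        le_trans (Set.ncard_le_ncard hun (Set.toFinite _)) (ih (κ'+1) V hdim f')
      -- the intersection: IVT argument
      have hintc : (drop '' Pt ∩ drop '' Pf).ncard ≤ ∑ i ∈ Finset.range (κ'+1), m.choose i := by
        by_cases hlast : f (Fin.last m) = 0
        · have : Pf = ∅ := by
            ext p
            simp only [hPf, Set.mem_setOf_eq, Set.mem_empty_iff_false, iff_false, not_and]
            rintro ⟨x, rfl⟩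
            simp [hpat, hlast]
          rw [this]
          simp
        · have hKdim : Module.finrank ℝ (LinearMap.ker (f (Fin.last m))) ≤ κ' := by
            have h1 := LinearMap.finrank_range_add_finrank_ker (f (Fin.last m))
            have h2 : 0 < Module.finrank ℝ (LinearMap.range (f (Fin.last m))) := by
              rw [Module.finrank_pos_iff]
              exact Submodule.nontrivial_iff_ne_bot.mpr
                (by simpa [LinearMap.range_eq_bot] using hlast)
            omega
          set K := LinearMap.ker (f (Fin.last m)) with hK
          set r : Fin m → (K →ₗ[ℝ] ℝ) := fun j => (f' j).comp K.subtype with hr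
          have hsubK : drop '' Pt ∩ drop '' Pf
              ⊆ Set.range (fun z : K => fun j => decide (0 ≤ r j z)) := by
            rintro p' ⟨⟨p, ⟨⟨x, rfl⟩, hx⟩, hdx⟩, ⟨q, ⟨⟨y, rfl⟩, hy⟩, hdy⟩⟩
            have ha : (0:ℝ) ≤ f (Fin.last m) x := by
              have := hx; simp only [hpat] at this; exact of_decide_eq_true this
            have hb : f (Fin.last m) y < 0 := by
              have := hy; simp only [hpat] at this
              exact lt_of_not_ge (of_decide_eq_false this)
            set a := f (Fin.last m) x with haa
            set b := f (Fin.last m) y with hbb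
            have hab : 0 < a - b := by linarith
            set t := a / (a - b) with ht
            have ht0 : 0 ≤ t := div_nonneg ha hab.le
            have ht1 : t ≤ 1 := (div_le_one hab).mpr (by linarith)
            have htab : t * (a - b) = a := div_mul_cancel₀ a hab.ne'
            set z := (1 - t) • x + t • y with hz
            have hzval : ∀ g : V →ₗ[ℝ] ℝ, g z = (1 - t) * g x + t * g y := by
              intro g; simp [hz, map_add, map_smul, smul_eq_mul]
            have hzK : z ∈ K := by
              have hcomb : (1 - t) * a + t * b = a - t * (a - b) := by ring
              rw [hK, LinearMap.mem_ker, hzval, ← haa, ← hbb, hcomb, htab, sub_self]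
            refine ⟨⟨z, hzK⟩, ?_⟩
            funext j
            have e1 : pat x j.castSucc = p' j := congrFun hdx j
            have e2 : pat y j.castSucc = p' j := congrFun hdy j
            have hrj : r j ⟨z, hzK⟩ = (1 - t) * f j.castSucc x + t * f j.castSucc y := by
              simp only [hr, hf', LinearMap.comp_apply, Submodule.subtype_apply]
              exact hzval _
            rw [← e1]
            show decide (0 ≤ r j ⟨z, hzK⟩) = decide (0 ≤ f j.castSucc x)
            rcases le_or_gt 0 (f j.castSucc x) with hcx | hcx
            · have hcy : 0 ≤ f j.castSucc y := by
                have h1 : pat y j.castSucc = true := by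
                  rw [e2, ← e1]; exact decide_eq_true hcx
                exact of_decide_eq_true h1
              have hz0 : 0 ≤ r j ⟨z, hzK⟩ := by
                rw [hrj]
                have h2 := mul_nonneg (by linarith : (0:ℝ) ≤ 1 - t) hcx
                have h3 := mul_nonneg ht0 hcy
                linarith
              rw [decide_eq_true hz0, decide_eq_true hcx]
            · have hcy : f j.castSucc y < 0 := by
                by_contra hcy
                push_neg at hcy
                have h1 : pat x j.castSucc = true := by
                  rw [e1, ← e2]; exact decide_eq_true hcy
                exact absurd (of_decide_eq_true h1) (not_le.mpr hcx)
              have hneg : r j ⟨z, hzK⟩ < 0 := by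
                rw [hrj]
                rcases lt_or_ge t 1 with h1 | h1
                · nlinarith
                · have ht : t = 1 := le_antisymm ht1 h1
                  rw [ht]; simpa using hcy
              rw [decide_eq_false (not_le.mpr hneg), decide_eq_false (not_le.mpr hcx)]
          calc (drop '' Pt ∩ drop '' Pf).ncard
              ≤ (Set.range (fun z : K => fun j => decide (0 ≤ r j z))).ncard :=
                Set.ncard_le_ncard hsubK (Set.toFinite _)
          _ ≤ _ := ih κ' K hKdim r
      -- Pascal identity
      have hpascal : ∑ i ∈ Finset.range (κ'+2), (m+1).choose i
          = ∑ i ∈ Finset.range (κ'+2), m.choose i + ∑ i ∈ Finset.range (κ'+1), m.choose i := by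
        rw [Finset.sum_range_succ' (fun i => (m+1).choose i),
          Finset.sum_range_succ' (fun i => m.choose i)]
        simp only [Nat.choose_succ_succ, Nat.choose_zero_right]
        rw [Finset.sum_add_distrib]
        ring
      show P.ncard ≤ ∑ i ∈ Finset.range (κ'+2), (m+1).choose i
      rw [hpascal]
      omega

lemma main_aux (k d : ℕ) (hk : 1 ≤ k) (hd : 1 ≤ d) (dm : ℕ → ℕ)
    (hdm0 : dm 0 = k) (hdim : ∀ i, dm i ≤ d)
    (W : ∀ i : ℕ, Matrix (Fin (dm (i + 1))) (Fin (dm i)) ℝ) (n : ℕ) :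
    ∃ (ι : Type) (_ : Fintype ι) (P : ι → Set (Fin (dm 0) → ℝ))
      (A : ι → ((Fin (dm 0) → ℝ) →ₗ[ℝ] (Fin (dm n) → ℝ))),
      Fintype.card ι ≤ (d ^ k + 1) ^ n ∧
      (∀ x, ∃ i, x ∈ P i) ∧
      (∀ i j, i ≠ j → Disjoint (P i) (P j)) ∧
      (∀ i, ∀ x ∈ P i, reluNet dm W n x = A i x) := by
  induction n with
  | zero =>
    refine ⟨PUnit, inferInstance, fun _ => Set.univ, fun _ => LinearMap.id, ?_, ?_, ?_, ?_⟩
    · simp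
    · exact fun x => ⟨PUnit.unit, Set.mem_univ x⟩
    · intro i j hij; exact absurd (Subsingleton.elim i j) hij
    · intro i x _; rfl
  | succ n ih =>
    obtain ⟨ι, inst, P, A, hcard, hcov, hdisj, hagree⟩ := ih
    set M : ι → ((Fin (dm 0) → ℝ) →ₗ[ℝ] (Fin (dm (n+1)) → ℝ)) :=
      fun i => (Matrix.mulVecLin (W n)).comp (A i) with hM
    set pat : ι → (Fin (dm 0) → ℝ) → (Fin (dm (n+1)) → Bool) :=
      fun i x => fun j => decide (0 ≤ M i x j) with hpat
    set S : ι → Finset (Fin (dm (n+1)) → Bool) :=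
      fun i => (Set.toFinite (Set.range (pat i))).toFinset with hS
    -- card bound for each S i
    have hScard : ∀ i, (S i).card ≤ d ^ k + 1 := by
      intro i
      have h1 : (Set.range (pat i)).ncard ≤ ∑ l ∈ Finset.range (k+1), (dm (n+1)).choose l := by
        have hfr : Module.finrank ℝ (Fin (dm 0) → ℝ) ≤ k := by
          rw [Module.finrank_fin_fun ℝ, hdm0]
        exact pattern_card (dm (n+1)) k (Fin (dm 0) → ℝ) hfr
          (fun j => (LinearMap.proj j).comp (M i))
      have h2 : ∑ l ∈ Finset.range (k+1), (dm (n+1)).choose l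
          ≤ ∑ l ∈ Finset.range (k+1), d.choose l :=
        Finset.sum_le_sum (fun l _ => Nat.choose_le_choose l (hdim (n+1)))
      have h3 := sum_choose_le d hd k
      have h4 : (S i).card = (Set.range (pat i)).ncard :=
        (Set.ncard_eq_toFinset_card _ _).symm
      omega
    refine ⟨(i : ι) × {p // p ∈ S i}, inferInstance,
      fun q => P q.1 ∩ {x | pat q.1 x = q.2.val},
      fun q => (LinearMap.pi (fun j => if q.2.val j = true then LinearMap.proj j else 0)).comp
        (M q.1), ?_, ?_, ?_, ?_⟩
    · -- cardinality
      have h1 : Fintype.card ((i : ι) × {p // p ∈ S i}) = ∑ i, (S i).card := by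
        rw [Fintype.card_sigma]
        congr 1
        funext i
        exact Fintype.card_coe (S i)
      rw [h1]
      calc ∑ i, (S i).card ≤ ∑ _i : ι, (d ^ k + 1) :=
            Finset.sum_le_sum (fun i _ => hScard i)
      _ = Fintype.card ι * (d ^ k + 1) := by
            rw [Finset.sum_const, Finset.card_univ, smul_eq_mul]
      _ ≤ (d ^ k + 1) ^ n * (d ^ k + 1) := Nat.mul_le_mul_right _ hcard
      _ = (d ^ k + 1) ^ (n + 1) := (pow_succ _ _).symm
    · -- cover
      intro x
      obtain ⟨i, hi⟩ := hcov x
      refine ⟨⟨i, ⟨pat i x, ?_⟩⟩, hi, rfl⟩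
      rw [hS, Set.Finite.mem_toFinset]
      exact Set.mem_range_self x
    · -- disjoint
      rintro ⟨i, p⟩ ⟨i', p'⟩ hne
      rw [Set.disjoint_left]
      rintro x ⟨hxP, hxp⟩ ⟨hxP', hxp'⟩
      have hii : i = i' := by
        by_contra h
        exact (Set.disjoint_left.mp (hdisj i i' h) hxP) hxP'
      subst hii
      apply hne
      have : p = p' := Subtype.ext ((hxp.symm.trans hxp') : p.val = p'.val)
      rw [this]
    · -- agreement
      rintro ⟨i, p⟩ x ⟨hxP, hxp⟩
      funext j
      show max ((W n).mulVec (reluNet dm W n x) j) 0 = _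
      rw [hagree i x hxP]
      have hMx : (W n).mulVec (A i x) = M i x := rfl
      rw [hMx]
      have hrhs : (LinearMap.pi (fun j => if p.val j = true then LinearMap.proj j else 0)).comp
          (M i) x j = if p.val j = true then M i x j else 0 := by
        rw [LinearMap.comp_apply, LinearMap.pi_apply]
        by_cases h : p.val j = true <;> simp [h]
      rw [hrhs]
      have hpj : p.val j = decide (0 ≤ M i x j) := by rw [← hxp]
      rcases le_or_gt 0 (M i x j) with h | h
      · rw [max_eq_left h, hpj, if_pos (decide_eq_true h)]
      · rw [max_eq_right h.le, hpj, if_neg]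
        rw [decide_eq_false (not_le.mpr h)]
        simp

theorem stmt_2 (k d n : ℕ) (hk : 1 ≤ k) (hd : 1 ≤ d) (dm : ℕ → ℕ)
    (hdm0 : dm 0 = k) (hdmn : dm n = d) (hdim : ∀ i, dm i ≤ d)
    (W : ∀ i : ℕ, Matrix (Fin (dm (i + 1))) (Fin (dm i)) ℝ) :
    ∃ (N : ℕ) (P : Fin N → Set (Fin (dm 0) → ℝ))
      (A : Fin N → ((Fin (dm 0) → ℝ) →ₗ[ℝ] (Fin (dm n) → ℝ))),
      N ≤ (d ^ k + 1) ^ n ∧ (d ^ k + 1) ^ n ≤ (2 * d) ^ (k * n) ∧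
      (∀ x, ∃ i, x ∈ P i) ∧
      (∀ i j, i ≠ j → Disjoint (P i) (P j)) ∧
      (∀ i, ∀ x ∈ P i, reluNet dm W n x = A i x) := by
  
  obtain ⟨ι, inst, P, A, hcard, hcov, hdisj, hagree⟩ :=
    main_aux k d hk hd dm hdm0 hdim W n
  have harith : (d ^ k + 1) ^ n ≤ (2 * d) ^ (k * n) := by
    rw [pow_mul]
    apply Nat.pow_le_pow_left
    have h1 : 1 ≤ d ^ k := Nat.one_le_pow _ _ (by omega)
    have h2 : 2 ≤ 2 ^ k := by
      calc 2 = 2 ^ 1 := rfl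
      _ ≤ 2 ^ k := Nat.pow_le_pow_right (by omega) hk
    calc d ^ k + 1 ≤ d ^ k + d ^ k := by omega
    _ = 2 * d ^ k := by ring
    _ ≤ 2 ^ k * d ^ k := Nat.mul_le_mul_right _ h2
    _ = (2 * d) ^ k := (mul_pow 2 d k).symm
  refine ⟨Fintype.card ι, fun j => P ((Fintype.equivFin ι).symm j),
    fun j => A ((Fintype.equivFin ι).symm j), hcard, harith, ?_, ?_, ?_⟩
  · intro x
    obtain ⟨i, hi⟩ := hcov x
    exact ⟨Fintype.equivFin ι i, by simpa using hi⟩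
  · intro i j hij
    exact hdisj _ _ (fun h => hij ((Fintype.equivFin ι).symm.injective h))
  · intro i x hx
    exact hagree _ x hx
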